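/- The supremum norm bound $\|f\|_\infty \le \sqrt{I(f)}$ holds for any sufficiently regular probability density $f$ on $\mathbb{R}$ with finite Fisher information, where $I(f) = \int_{\mathbb{R}} \frac{(f'(x))^2}{f(x)}\,dx$. -/

import Mathlib

open Real MeasureTheory Filter

theorem stmt16 (f : ℝ → ℝ) (hfpos : ∀ x, 0 < f x)
    (hf : ContDiff ℝ 1 f) (hfint : ∫ x, f x = 1)
    (hvanish : Tendsto f atTop (nhds 0) ∧ Tendsto f atBot (nhds 0))
    (hI : Integrable (fun x => (deriv f x) ^ 2 / f x)) :
    ∀ x : ℝ, f x ≤ Real.sqrt (∫ y, (deriv f y) ^ 2 / f y) := by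
  intro x
  set I : ℝ := ∫ y, (deriv f y) ^ 2 / f y with hIdef
  have hfc : Continuous f := hf.continuous
  have hf'c : Continuous (deriv f) := hf.continuous_deriv le_rfl
  have hfInt : Integrable f := integrable_of_integral_eq_one hfint
  have hI0 : 0 ≤ I := integral_nonneg (fun y => div_nonneg (sq_nonneg _) (hfpos y).le)
  have key : ∀ t : ℝ, 0 < t → f x ≤ (I / t + t) / 2 := by
    intro t ht
    set g : ℝ → ℝ := fun y => ((deriv f y) ^ 2 / f y / t + f y * t) / 2 with hg
    have hgInt : Integrable g := (((hI.div_const t).add (hfInt.mul_const t)).div_const 2)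
    have hle : ∀ y, |deriv f y| ≤ g y := by
      intro y
      have hfy := hfpos y
      have hft : 0 < f y * t := mul_pos hfy ht
      have hmul : |deriv f y| * 2 * (f y * t) ≤ ((deriv f y) ^ 2 / f y / t + f y * t) * (f y * t) := by
        have heq : ((deriv f y) ^ 2 / f y / t) * (f y * t) = (deriv f y) ^ 2 := by
          field_simp
        nlinarith [sq_nonneg (|deriv f y| - f y * t), sq_abs (deriv f y)]
      have h2 : |deriv f y| * 2 ≤ (deriv f y) ^ 2 / f y / t + f y * t :=
        (mul_le_mul_iff_of_pos_right hft).mp hmul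
      show |deriv f y| ≤ ((deriv f y) ^ 2 / f y / t + f y * t) / 2
      linarith
    have hgnn : ∀ y, 0 ≤ g y := fun y => (abs_nonneg _).trans (hle y)
    have hf'Int : Integrable (deriv f) := by
      refine hgInt.mono hf'c.aestronglyMeasurable (Eventually.of_forall fun y => ?_)
      rw [norm_eq_abs, norm_eq_abs, abs_of_nonneg (hgnn y)]
      exact hle y
    have hftc : ∫ y in Set.Iic x, deriv f y = f x - 0 :=
      integral_Iic_of_hasDerivAt_of_tendsto'
        (fun y _ => (hf.differentiable one_ne_zero y).hasDerivAt)
        hf'Int.integrableOn hvanish.2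
    have step1 : f x ≤ ∫ y in Set.Iic x, g y := by
      rw [← sub_zero (f x), ← hftc]
      exact setIntegral_mono_on hf'Int.integrableOn hgInt.integrableOn measurableSet_Iic
        (fun y _ => (le_abs_self _).trans (hle y))
    have step2 : ∫ y in Set.Iic x, g y ≤ ∫ y, g y :=
      setIntegral_le_integral hgInt (Eventually.of_forall hgnn)
    have hcalc : ∫ y, g y = (I / t + t) / 2 := by
      rw [hg]
      rw [integral_div, integral_add (hI.div_const t) (hfInt.mul_const t),
        integral_div, integral_mul_const, hfint, one_mul, ← hIdef]
    linarith [step1, step2, hcalc ▸ step2]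
  rcases hI0.eq_or_lt with h0 | hpos
  · have hx0 : f x ≤ 0 := by
      have h : ∀ t : ℝ, 0 < t → f x ≤ 0 + t := by
        intro t ht
        have := key t ht
        rw [← h0] at this
        simp only [zero_div, zero_add] at this
        linarith
      exact le_of_forall_pos_le_add h
    rw [← h0, Real.sqrt_zero]
    exact hx0
  · have := key (Real.sqrt I) (Real.sqrt_pos.mpr hpos)
    rw [Real.div_sqrt] at this
    linarith
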